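/- arXiv:2404.14781 — 3 statements merged into one kernel-verified Lean document; each statement's English description precedes it below -/
import Mathlib

section
/- Let H(x) = x + 1 and let b, c ≥ 1 and x ≥ 2c be natural numbers, and set G = H^{ω^b·c} (Hardy hierarchy). Then for every a ≥ 1, H^{ω^{b+a}}((c+1)·x) ≥ (c+1)·G^{ω^a}(x). -/
open Ordinal

/-- The graph of the Hardy hierarchy `h^α` for ordinals `α ≤ ω^ω`, defined with
the standard fundamental sequences `(ω^ω)(x) = ω^(x+1)` and
`(β + ω^(k+1))(x) = β + ω^k·(x+1)` (for `β + ω^(k+1)` in Cantor Normal Form,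
i.e. `ω^(k+1) ∣ β`).  `HardyRel h α x y` means `h^α(x) = y`. -/
inductive HardyRel (h : ℕ → ℕ) : Ordinal → ℕ → ℕ → Prop
  | zero (x : ℕ) : HardyRel h 0 x x
  | succ (α : Ordinal) (x y : ℕ) : HardyRel h α (h x) y → HardyRel h (α + 1) x y
  | top (x y : ℕ) : HardyRel h (omega0 ^ (x + 1 : ℕ)) x y →
      HardyRel h (omega0 ^ omega0) x y
  | limit (β : Ordinal) (k x y : ℕ) : omega0 ^ (k + 1) ∣ β →
      HardyRel h (β + omega0 ^ k * ((x + 1 : ℕ) : Ordinal)) x y →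
      HardyRel h (β + omega0 ^ (k + 1)) x y

def hf (h : ℕ → ℕ) : ℕ → ℕ → ℕ
  | 0 => h
  | k+1 => fun x => (hf h k)^[x+1] x

lemma hr_shift (h : ℕ → ℕ) :
    ∀ (k m : ℕ) (α : Ordinal) (x y : ℕ), omega0 ^ k ∣ α →
      HardyRel h α ((hf h k)^[m] x) y → HardyRel h (α + omega0 ^ k * (m : Ordinal)) x y := by
  intro k
  induction k with
  | zero =>
    intro m
    induction m with
    | zero => intro α x y _ H; simpa using H
    | succ m ih =>
      intro α x y hdvd H
      have e : α + omega0 ^ 0 * ((m+1 : ℕ) : Ordinal)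
          = (α + omega0 ^ 0 * (m : Ordinal)) + 1 := by
        push_cast
        rw [pow_zero, one_mul, one_mul, add_assoc]
      rw [e]
      refine HardyRel.succ _ _ _ (ih α (h x) y hdvd ?_)
      rw [Function.iterate_succ_apply] at H
      exact H
  | succ k ihk =>
    intro m
    induction m with
    | zero => intro α x y _ H; simpa using H
    | succ m ihm =>
      intro α x y hdvd H
      have e : α + omega0 ^ (k+1) * ((m+1 : ℕ) : Ordinal)
          = (α + omega0 ^ (k+1) * (m : Ordinal)) + omega0 ^ (k+1) := by
        push_cast
        rw [mul_add, mul_one, add_assoc]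
      rw [e]
      refine HardyRel.limit _ k x y (dvd_add hdvd (dvd_mul_right _ _)) ?_
      refine ihk (x+1) (α + omega0 ^ (k+1) * (m : Ordinal)) x y
        (dvd_add (dvd_trans (pow_dvd_pow _ (Nat.le_succ k)) hdvd)
          (dvd_mul_of_dvd_left (pow_dvd_pow _ (Nat.le_succ k)) _)) ?_
      rw [Function.iterate_succ_apply] at H
      exact ihm α (hf h (k+1) x) y hdvd H

lemma pow_omega0_pos (k : ℕ) : (0:Ordinal) < omega0 ^ k := by
  rw [← opow_natCast]; exact opow_pos _ omega0_pos

lemma isLimit_pow_omega0 (k : ℕ) : Order.IsSuccLimit ((omega0 : Ordinal) ^ (k+1)) := by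
  rw [pow_succ]; exact isSuccLimit_mul_right (pow_omega0_pos k) isSuccLimit_omega0

lemma succ_ne_of_isLimit {α β : Ordinal} (L : Order.IsSuccLimit β) : α + 1 ≠ β := by
  intro e
  have h1 : α < β := by
    rw [← e, Ordinal.add_one_eq_succ]; exact Order.lt_succ α
  have h2 := L.succ_lt h1
  rw [← Ordinal.add_one_eq_succ, e] at h2
  exact lt_irrefl _ h2

lemma omul_left_cancel {a b c : Ordinal} (h0 : 0 < a) (h : a * b = a * c) : b = c :=
  le_antisymm (le_of_mul_le_mul_left h.le h0) (le_of_mul_le_mul_left h.ge h0)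

lemma limit_decomp_aux {γ γ' : Ordinal} {j j' : ℕ} (d : omega0 ^ (j+1) ∣ γ)
    (d' : omega0 ^ (j'+1) ∣ γ') (e : γ + omega0 ^ (j+1) = γ' + omega0 ^ (j'+1))
    (hjj : j < j') : False := by
  obtain ⟨δ, rfl⟩ := d
  obtain ⟨δ', rfl⟩ := d'
  rw [← mul_add_one, ← mul_add_one] at e
  have hj : j' + 1 = (j+1) + (j' - j) := by omega
  have e3 : (omega0:Ordinal) ^ (j+1) * (δ+1) = omega0 ^ (j+1) * (omega0 ^ (j'-j) * (δ'+1)) := by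
    rw [← mul_assoc, ← pow_add, ← hj]; exact e
  have e2 := omul_left_cancel (pow_omega0_pos (j+1)) e3
  have L : Order.IsSuccLimit ((omega0 : Ordinal) ^ (j'-j) * (δ' + 1)) := by
    obtain ⟨i, hi⟩ : ∃ i, j' - j = i + 1 := ⟨j' - j - 1, by omega⟩
    rw [hi]
    refine isSuccLimit_mul_left (isLimit_pow_omega0 i) ?_
    exact lt_of_lt_of_le zero_lt_one le_add_self
  exact succ_ne_of_isLimit L e2

lemma limit_decomp {β β' : Ordinal} {k k' : ℕ} (d : omega0 ^ (k+1) ∣ β)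
    (d' : omega0 ^ (k'+1) ∣ β') (e : β + omega0 ^ (k+1) = β' + omega0 ^ (k'+1)) :
    k = k' ∧ β = β' := by
  rcases lt_trichotomy k k' with hlt | heq | hgt
  · exact absurd (limit_decomp_aux d d' e hlt) not_false
  · subst heq
    refine ⟨rfl, ?_⟩
    obtain ⟨δ, rfl⟩ := d
    obtain ⟨δ', rfl⟩ := d'
    rw [← mul_add_one, ← mul_add_one] at e
    have := omul_left_cancel (pow_omega0_pos (k+1)) e
    have hδ : δ = δ' := by
      rw [Ordinal.add_one_eq_succ, Ordinal.add_one_eq_succ] at this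
      exact Order.succ_injective this
    rw [hδ]
  · exact absurd (limit_decomp_aux d' d e.symm hgt) not_false

lemma add_pow_pos (α : Ordinal) (k : ℕ) : (0:Ordinal) < α + omega0 ^ (k+1) :=
  lt_of_lt_of_le (pow_omega0_pos (k+1)) le_add_self

universe u

lemma hr_cases {h : ℕ → ℕ} {α : Ordinal.{u}} {x y : ℕ} (H : HardyRel h α x y) :
    (α = 0 ∧ y = x) ∨
    (∃ α' : Ordinal.{u}, α = α' + 1 ∧ HardyRel h α' (h x) y) ∨
    (α = omega0 ^ omega0 ∧ HardyRel h (omega0 ^ (x+1 : ℕ) : Ordinal.{u}) x y) ∨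
    (∃ (β : Ordinal.{u}) (k : ℕ), omega0 ^ (k+1) ∣ β ∧ α = β + omega0 ^ (k+1) ∧
      HardyRel h (β + omega0 ^ k * ((x+1 : ℕ) : Ordinal.{u})) x y) := by
  cases H with
  | zero x => exact Or.inl ⟨rfl, rfl⟩
  | succ α x y hs => exact Or.inr (Or.inl ⟨α, rfl, hs⟩)
  | top x y hs => exact Or.inr (Or.inr (Or.inl ⟨rfl, hs⟩))
  | limit β k x y d hs => exact Or.inr (Or.inr (Or.inr ⟨β, k, d, rfl, hs⟩))

lemma hr_unique (h : ℕ → ℕ) : ∀ {α : Ordinal.{u}} {x y : ℕ}, HardyRel h α x y →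
    α < omega0 ^ omega0 → ∀ {y' : ℕ}, HardyRel h α x y' → y = y' := by
  intro α x y H1
  induction H1 with
  | zero x =>
    intro _ y' H2
    rcases hr_cases H2 with ⟨_, rfl⟩ | ⟨α', e, _⟩ | ⟨e, _⟩ | ⟨β, k, _, e, _⟩
    · rfl
    · exact absurd e.symm (ne_of_gt (lt_of_lt_of_le zero_lt_one le_add_self))
    · exact absurd e (ne_of_lt (opow_pos _ omega0_pos))
    · exact absurd e.symm (ne_of_gt (add_pow_pos β k))
  | succ α x y hsub ih =>
    intro hlt y' H2
    rcases hr_cases H2 with ⟨e, _⟩ | ⟨α', e, hsub'⟩ | ⟨e, _⟩ | ⟨β, k, _, e, _⟩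
    · exact absurd e (ne_of_gt (lt_of_lt_of_le zero_lt_one le_add_self))
    · have hα : α = α' := by
        rw [Ordinal.add_one_eq_succ, Ordinal.add_one_eq_succ] at e
        exact Order.succ_injective e
      subst hα
      exact ih (lt_of_le_of_lt le_self_add hlt) hsub'
    · rw [e] at hlt; exact absurd hlt (lt_irrefl _)
    · exact absurd e (succ_ne_of_isLimit (isSuccLimit_add β (isLimit_pow_omega0 k)))
  | top x y hsub ih =>
    intro hlt
    exact absurd hlt (lt_irrefl _)
  | limit β k x y hd hsub ih =>
    intro hlt y' H2
    rcases hr_cases H2 with ⟨e, _⟩ | ⟨α', e, _⟩ | ⟨e, _⟩ | ⟨β', k', d', e, hsub'⟩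
    · exact absurd e (ne_of_gt (add_pow_pos β k))
    · exact absurd e.symm (succ_ne_of_isLimit (isSuccLimit_add β (isLimit_pow_omega0 k)))
    · rw [e] at hlt; exact absurd hlt (lt_irrefl _)
    · obtain ⟨hk, hβ⟩ := limit_decomp hd d' e
      subst hk; subst hβ
      have hin : β + omega0 ^ k * ((x+1 : ℕ) : Ordinal) < β + omega0 ^ (k+1) := by
        apply add_lt_add_right
        rw [pow_succ]
        exact mul_lt_mul_of_pos_left (nat_lt_omega0 (x+1)) (pow_omega0_pos k)
      exact ih (lt_trans hin hlt) hsub'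

lemma iter_infl {g : ℕ → ℕ} (hg : ∀ x, x ≤ g x) : ∀ (n : ℕ) (x : ℕ), x ≤ g^[n] x := by
  intro n
  induction n with
  | zero => simp
  | succ n ih =>
    intro x
    rw [Function.iterate_succ_apply]
    exact (hg x).trans (ih (g x))

lemma hf_infl {h : ℕ → ℕ} (hh : ∀ x, x ≤ h x) : ∀ (k : ℕ) (x : ℕ), x ≤ hf h k x := by
  intro k
  induction k with
  | zero => exact hh
  | succ k ih => intro x; exact iter_infl ih (x+1) x

abbrev F : ℕ → ℕ → ℕ := hf (fun n => n + 1)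

lemma F_infl (k x : ℕ) : x ≤ F k x := hf_infl (fun x => Nat.le_succ x) k x

lemma succ_iterate (n x : ℕ) : (fun n => n + 1)^[n] x = x + n := by
  induction n generalizing x with
  | zero => simp
  | succ n ih => rw [Function.iterate_succ_apply, ih]; omega

lemma F1_eq (x : ℕ) : F 1 x = 2 * x + 1 := by
  show (fun n => n + 1)^[x+1] x = 2 * x + 1
  rw [succ_iterate]; omega

lemma F_double (k : ℕ) (hk : 1 ≤ k) (x : ℕ) : 2 * x ≤ F k x := by
  induction k with
  | zero => omega
  | succ k ih =>
    rcases Nat.eq_or_lt_of_le hk with h1 | h1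
    · obtain rfl : k = 0 := by omega
      rw [F1_eq]; omega
    · -- k ≥ 1
      have hk1 : 1 ≤ k := by omega
      calc 2 * x ≤ F k x := ih hk1
        _ ≤ (F k)^[x] (F k x) := iter_infl (F_infl k) x (F k x)
        _ = F (k+1) x := by rw [← Function.iterate_succ_apply]; rfl

lemma iterP {c : ℕ} {g1 g2 : ℕ → ℕ}
    (step : ∀ u v, (c+1)*(u+1) ≤ v+1 → (c+1)*(g1 u+1) ≤ g2 v+1) :
    ∀ (n : ℕ) (u v : ℕ), (c+1)*(u+1) ≤ v+1 → (c+1)*(g1^[n] u + 1) ≤ g2^[n] v + 1 := by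
  intro n
  induction n with
  | zero => simp
  | succ n ih =>
    intro u v hP
    rw [Function.iterate_succ_apply, Function.iterate_succ_apply]
    exact ih _ _ (step u v hP)

lemma genP {c : ℕ} {g1 g2 : ℕ → ℕ}
    (step : ∀ u v, (c+1)*(u+1) ≤ v+1 → (c+1)*(g1 u+1) ≤ g2 v+1)
    (infl2 : ∀ x, x ≤ g2 x) {m n : ℕ} (hmn : m ≤ n) (u v : ℕ)
    (hP : (c+1)*(u+1) ≤ v+1) : (c+1)*(g1^[m] u + 1) ≤ g2^[n] v + 1 := by
  have hsplit : g2^[n] v = g2^[m] (g2^[n-m] v) := by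
    rw [← Function.iterate_add_apply]
    congr 1
    omega
  rw [hsplit]
  refine iterP step m u _ ?_
  have := iter_infl infl2 (n-m) v
  omega

lemma presP (c : ℕ) : ∀ (k : ℕ) (u v : ℕ), (c+1)*(u+1) ≤ v+1 →
    (c+1)*(F (k+1) u + 1) ≤ F (k+1) v + 1 := by
  intro k
  induction k with
  | zero =>
    intro u v hP
    rw [F1_eq, F1_eq]
    nlinarith
  | succ k ih =>
    intro u v hP
    show (c+1) * ((F (k+1))^[u+1] u + 1) ≤ (F (k+1))^[v+1] v + 1
    refine genP ih (F_infl (k+1)) ?_ u v hP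
    calc u + 1 ≤ (c+1)*(u+1) := Nat.le_mul_of_pos_left _ (by omega)
      _ ≤ v + 1 := hP

lemma SP (c b' : ℕ) (hc : 1 ≤ c) :
    ∀ (j : ℕ) (u v : ℕ), (c+1)*(u+1) ≤ v+1 →
      (c+1)*(hf (fun t => (F (b'+1))^[c] t) (j+1) u + 1) ≤ F ((b'+1)+(j+1)) v + 1 := by
  intro j
  induction j with
  | zero =>
    intro u v hP
    show (c+1) * ((fun t => (F (b'+1))^[c] t)^[u+1] u + 1) ≤ (F (b'+1))^[v+1] v + 1
    have e1 : (fun t => (F (b'+1))^[c] t)^[u+1] u = (F (b'+1))^[c*(u+1)] u := by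
      rw [Function.iterate_mul]
    rw [e1]
    refine genP (presP c b') (F_infl (b'+1)) ?_ u v hP
    calc c*(u+1) ≤ (c+1)*(u+1) := by nlinarith
      _ ≤ v+1 := hP
  | succ j ih =>
    intro u v hP
    show (c+1) * ((hf (fun t => (F (b'+1))^[c] t) (j+1))^[u+1] u + 1)
        ≤ (F ((b'+1)+(j+1)))^[v+1] v + 1
    refine genP ih (F_infl _) ?_ u v hP
    calc u + 1 ≤ (c+1)*(u+1) := Nat.le_mul_of_pos_left _ (by omega)
      _ ≤ v + 1 := hP

lemma main_arith (b' c x : ℕ) (hc : 1 ≤ c) (hx : 2*c ≤ x) (a' : ℕ) :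
    (c+1) * hf (fun t => (F (b'+1))^[c] t) (a'+1) x ≤ F ((b'+1)+(a'+1)) ((c+1)*x) := by
  set b := b'+1 with hb
  set v := (c+1)*x with hv
  clear_value v
  have hx2 : 2 ≤ x := by omega
  cases a' with
  | zero =>
    have e1 : hf (fun t => (F b)^[c] t) 1 x = (F b)^[c*(x+1)] x := by
      show (fun t => (F b)^[c] t)^[x+1] x = _
      rw [Function.iterate_mul]
    have e2 : F (b+1) v = (F b)^[c*(x+1)] ((F b)^[x+1-c] v) := by
      show (F b)^[v+1] v = _
      rw [← Function.iterate_add_apply]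
      congr 1
      rw [hv]
      obtain ⟨d, rfl⟩ : ∃ d, x = c + d := ⟨x - c, by omega⟩
      have h2 : c + d + 1 - c = d + 1 := by omega
      rw [h2]; ring
    rw [e1, e2]
    set w := (F b)^[x+1-c] v with hw
    clear_value w
    have hw2 : 2*v ≤ w := by
      obtain ⟨s, hs⟩ : ∃ s, x+1-c = s+1 := ⟨x-c, by omega⟩
      rw [hw, hs, Function.iterate_succ_apply]
      exact (F_double b (by omega) v).trans (iter_infl (F_infl b) s (F b v))
    have hcx : c + 1 ≤ (c+1)*x := Nat.le_mul_of_pos_right _ (by omega)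
    have hPxw : (c+1)*(x+1) ≤ w+1 := by
      have h1 : (c+1)*(x+1) = (c+1)*x + (c+1) := by ring
      linarith [hw2, hv]
    have hit := iterP (presP c b') (c*(x+1)) x w hPxw
    have hr : (c+1)*((F b)^[c*(x+1)] x + 1) = (c+1)*((F b)^[c*(x+1)] x) + (c+1) := by ring
    linarith
  | succ j =>
    have e2 : F (b+(j+2)) v = (F (b+(j+1)))^[x+1] ((F (b+(j+1)))^[c*x] v) := by
      show (F (b+(j+1)))^[v+1] v = _
      rw [← Function.iterate_add_apply]
      congr 1
      rw [hv]; ring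
    have e1 : hf (fun t => (F b)^[c] t) (j+2) x
        = (hf (fun t => (F b)^[c] t) (j+1))^[x+1] x := rfl
    rw [e1, e2]
    set w := (F (b+(j+1)))^[c*x] v with hw
    clear_value w
    have hw2 : 2*v ≤ w := by
      have h1 : 0 < c*x := Nat.mul_pos (by omega) (by omega)
      obtain ⟨s, hs⟩ : ∃ s, c*x = s+1 := ⟨c*x-1, (Nat.succ_pred_eq_of_pos h1).symm⟩
      rw [hw, hs, Function.iterate_succ_apply]
      exact (F_double (b+(j+1)) (by omega) v).trans (iter_infl (F_infl _) s _)
    have hcx : c + 1 ≤ (c+1)*x := Nat.le_mul_of_pos_right _ (by omega)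
    have hPxw : (c+1)*(x+1) ≤ w+1 := by
      have h1 : (c+1)*(x+1) = (c+1)*x + (c+1) := by ring
      linarith [hw2, hv]
    have hit := iterP (SP c b' hc j) (x+1) x w hPxw
    have hr : (c+1)*((hf (fun t => (F b)^[c] t) (j+1))^[x+1] x + 1)
        = (c+1)*((hf (fun t => (F b)^[c] t) (j+1))^[x+1] x) + (c+1) := by ring
    linarith

lemma pow_lt_opow_omega0 (n : ℕ) : ((omega0 : Ordinal.{u}) ^ n) < omega0 ^ omega0 := by
  rw [← opow_natCast]
  exact (opow_lt_opow_iff_right one_lt_omega0).2 (nat_lt_omega0 n)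

/-- With `H(x) = x + 1`, `b, c ≥ 1`, `x ≥ 2c` and `G = H^(ω^b·c)`, for every
`a ≥ 1` we have `H^(ω^(b+a))((c+1)·x) ≥ (c+1)·G^(ω^a)(x)`.  The function `G` is
specified via its Hardy-hierarchy graph. -/
theorem stmt9 (b c : ℕ) (hb : 1 ≤ b) (hc : 1 ≤ c) (x : ℕ) (hx : 2 * c ≤ x)
    (G : ℕ → ℕ)
    (hG : ∀ u w, HardyRel (fun n => n + 1) (omega0 ^ b * (c : Ordinal)) u w ↔ G u = w)
    (a : ℕ) (ha : 1 ≤ a) :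
    ∀ y z, HardyRel (fun n => n + 1) (omega0 ^ (b + a)) ((c + 1) * x) y →
      HardyRel G (omega0 ^ a) x z → (c + 1) * z ≤ y := by
  intro y z Hy Hz
  have hGfun : G = fun t => (hf (fun n => n + 1) b)^[c] t := by
    funext u
    have ex : HardyRel (fun n => n + 1) (omega0 ^ b * (c : Ordinal)) u
        ((hf (fun n => n + 1) b)^[c] u) := by
      have := hr_shift (fun n => n + 1) b c 0 u ((hf (fun n => n + 1) b)^[c] u)
        (dvd_zero _) (HardyRel.zero _)
      simpa using this
    exact (hG u _).mp ex
  subst hGfun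
  have ey : HardyRel (fun n => n + 1) (omega0 ^ (b + a)) ((c + 1) * x)
      (hf (fun n => n + 1) (b + a) ((c + 1) * x)) := by
    have := hr_shift (fun n => n + 1) (b + a) 1 0 ((c + 1) * x)
      (hf (fun n => n + 1) (b + a) ((c + 1) * x)) (dvd_zero _) (HardyRel.zero _)
    simpa using this
  have hy : y = hf (fun n => n + 1) (b + a) ((c + 1) * x) :=
    hr_unique _ Hy (pow_lt_opow_omega0 _) ey
  have ez : HardyRel (fun t => (hf (fun n => n + 1) b)^[c] t) (omega0 ^ a) x
      (hf (fun t => (hf (fun n => n + 1) b)^[c] t) a x) := by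
    have := hr_shift (fun t => (hf (fun n => n + 1) b)^[c] t) a 1 0 x
      (hf (fun t => (hf (fun n => n + 1) b)^[c] t) a x) (dvd_zero _) (HardyRel.zero _)
    simpa using this
  have hz : z = hf (fun t => (hf (fun n => n + 1) b)^[c] t) a x :=
    hr_unique _ Hz (pow_lt_opow_omega0 _) ez
  rw [hy, hz]
  obtain ⟨b', rfl⟩ : ∃ b', b = b' + 1 := ⟨b - 1, by omega⟩
  obtain ⟨a', rfl⟩ : ∃ a', a = a' + 1 := ⟨a - 1, by omega⟩
  exact main_arith b' c x hc hx a'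
end

section
/- Let h : ℕ → ℕ be monotone inflationary, and consider the Hardy hierarchy with H(x) = x+1. Then for all b ≥ 1, c ≥ 1, and x ∈ ℕ, H^{ω^b·c}(x) ≥ 2^c·x. -/
open Ordinal

/- ### Auxiliary ordinal facts -/

private lemma npow_omega0_pos (k : ℕ) : (0 : Ordinal) < omega0 ^ k := by
  rw [← opow_natCast]; exact opow_pos _ omega0_pos

private lemma npow_omega0_isLimit (k : ℕ) : Order.IsSuccLimit ((omega0 ^ (k + 1) : Ordinal)) := by
  rw [pow_succ]
  exact isSuccLimit_mul_right (npow_omega0_pos k) isSuccLimit_omega0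

private lemma isLimit_ne_succ {l α : Ordinal} (hl : Order.IsSuccLimit l) : l ≠ α + 1 := by
  intro h
  have h1 : α < l := by rw [h]; exact lt_add_one α
  have h2 := hl.succ_lt h1
  rw [Ordinal.add_one_eq_succ] at h
  exact absurd (h ▸ h2) (lt_irrefl _)

private lemma add_npow_isLimit (β : Ordinal) (k : ℕ) :
    Order.IsSuccLimit (β + omega0 ^ (k + 1)) :=
  isSuccLimit_add β (npow_omega0_isLimit k)

private lemma npow_lt_opow_omega0 (k : ℕ) :
    (omega0 ^ (k + 1) : Ordinal) < omega0 ^ (omega0 : Ordinal) := by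
  rw [← opow_natCast]
  exact (opow_lt_opow_iff_right one_lt_omega0).2 (nat_lt_omega0 (k + 1))

private lemma add_npow_ne_top (β : Ordinal) (k : ℕ) :
    β + omega0 ^ (k + 1) ≠ omega0 ^ (omega0 : Ordinal) := by
  rcases lt_or_ge β (omega0 ^ (omega0 : Ordinal)) with hβ | hβ
  · exact ne_of_lt (principal_add_omega0_opow _ hβ (npow_lt_opow_omega0 k))
  · intro h
    have hlt : β < β + omega0 ^ (k + 1) := by
      conv_lhs => rw [← add_zero β]
      exact add_lt_add_right (npow_omega0_pos (k + 1)) β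
    rw [h] at hlt
    exact absurd (hβ.trans_lt hlt) (lt_irrefl _)

private lemma mul_left_cancel_ord {a b c : Ordinal} (ha : 0 < a) (h : a * b = a * c) :
    b = c :=
  (mul_left_cancel_iff_of_pos ha).mp h

private lemma uniq_aux {k k' : ℕ} {δ δ' : Ordinal} (hkk' : k ≤ k')
    (heq : (omega0 : Ordinal) ^ (k + 1) * (δ + 1) = omega0 ^ (k' + 1) * (δ' + 1)) :
    k = k' := by
  by_contra hne
  obtain ⟨d, hd⟩ : ∃ d, k' + 1 = (k + 1) + (d + 1) := ⟨k' - k - 1, by omega⟩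
  rw [hd, pow_add omega0 (k + 1) (d + 1), mul_assoc] at heq
  have hc : δ + 1 = omega0 ^ (d + 1) * (δ' + 1) :=
    mul_left_cancel_ord (npow_omega0_pos (k + 1)) heq
  have hlim : Order.IsSuccLimit ((omega0 : Ordinal) ^ (d + 1) * (δ' + 1)) :=
    isSuccLimit_mul_left (npow_omega0_isLimit d)
      (lt_of_lt_of_le zero_lt_one le_add_self)
  exact isLimit_ne_succ hlim hc.symm

private lemma uniq {β β' : Ordinal} {k k' : ℕ}
    (hβ : omega0 ^ (k + 1) ∣ β) (hβ' : omega0 ^ (k' + 1) ∣ β')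
    (heq : β + omega0 ^ (k + 1) = β' + omega0 ^ (k' + 1)) :
    k = k' ∧ β = β' := by
  obtain ⟨δ, rfl⟩ := hβ
  obtain ⟨δ', rfl⟩ := hβ'
  rw [← mul_add_one, ← mul_add_one] at heq
  have hk : k = k' := by
    rcases le_total k k' with hkk' | hkk'
    · exact uniq_aux hkk' heq
    · exact (uniq_aux hkk' heq.symm).symm
  subst hk
  have hδ : δ + 1 = δ' + 1 := mul_left_cancel_ord (npow_omega0_pos (k + 1)) heq
  rw [Ordinal.add_one_eq_succ, Ordinal.add_one_eq_succ] at hδ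
  rw [Order.succ_injective hδ]
  exact ⟨rfl, rfl⟩

private lemma add_one_ne_zero_ord (α : Ordinal) : α + 1 ≠ 0 :=
  (lt_of_lt_of_le zero_lt_one le_add_self).ne'

private lemma opow_omega0_isLimit : Order.IsSuccLimit ((omega0 : Ordinal) ^ (omega0 : Ordinal)) :=
  isSuccLimit_opow_left isSuccLimit_omega0 omega0_ne_zero

/- ### Functionality of `HardyRel` -/

private lemma hardy_fun {h : ℕ → ℕ} :
    ∀ {α : Ordinal} {x y : ℕ}, HardyRel h α x y → ∀ {z : ℕ}, HardyRel h α x z → y = z := by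
  intro α x y hd
  induction hd with
  | zero x =>
    intro z hz
    generalize hα : (0 : Ordinal) = γ at hz
    cases hz with
    | zero => rfl
    | succ α' x' z h' => exact absurd hα.symm (add_one_ne_zero_ord α')
    | top x' z h' => exact absurd hα opow_omega0_isLimit.pos.ne
    | limit β' k' x' z hdvd h' => exact absurd hα (add_npow_isLimit β' k').pos.ne
  | succ α x y hsub IH =>
    intro z hz
    generalize hα : α + 1 = γ at hz
    cases hz with
    | zero => exact absurd hα (add_one_ne_zero_ord α)
    | succ α' x' z h' =>
      have : α = α' := by
        rw [Ordinal.add_one_eq_succ, Ordinal.add_one_eq_succ] at hα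
        exact Order.succ_injective hα
      subst this
      exact IH h'
    | top x' z h' => exact absurd hα.symm (isLimit_ne_succ opow_omega0_isLimit)
    | limit β' k' x' z hdvd h' =>
      exact absurd hα.symm (isLimit_ne_succ (add_npow_isLimit β' k'))
  | top x y hsub IH =>
    intro z hz
    generalize hα : (omega0 : Ordinal) ^ (omega0 : Ordinal) = γ at hz
    cases hz with
    | zero => exact absurd hα opow_omega0_isLimit.pos.ne'
    | succ α' x' z h' => exact absurd hα (isLimit_ne_succ opow_omega0_isLimit)
    | top x' z h' => exact IH h'
    | limit β' k' x' z hdvd h' => exact absurd hα.symm (add_npow_ne_top β' k')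
  | limit β k x y hdvd hsub IH =>
    intro z hz
    generalize hα : β + omega0 ^ (k + 1) = γ at hz
    cases hz with
    | zero => exact absurd hα (add_npow_isLimit β k).pos.ne'
    | succ α' x' z h' => exact absurd hα (isLimit_ne_succ (add_npow_isLimit β k))
    | top x' z h' => exact absurd hα (add_npow_ne_top β k)
    | limit β' k' x' z hdvd' h' =>
      obtain ⟨hk, hb⟩ := uniq hdvd hdvd' hα
      subst hk; subst hb
      exact IH h'

/- ### The explicit value of the Hardy function -/

/-- `eb b` is the function `H^(ω^b)` for `H = (· + 1)`. -/
private def eb : ℕ → ℕ → ℕ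
  | 0 => fun x => x + 1
  | b + 1 => fun x => (eb b)^[x + 1] x

private lemma iter_le {f : ℕ → ℕ} (hf : ∀ z, z ≤ f z) : ∀ (n : ℕ) (x : ℕ), x ≤ f^[n] x := by
  intro n
  induction n with
  | zero => intro x; simp
  | succ n IH =>
    intro x
    rw [Function.iterate_succ_apply]
    exact (hf x).trans (IH (f x))

private lemma eb_infl : ∀ (b : ℕ) (x : ℕ), x ≤ eb b x := by
  intro b
  induction b with
  | zero => intro x; exact Nat.le_succ x
  | succ b IH =>
    intro x
    show x ≤ (eb b)^[x + 1] x
    exact iter_le IH (x + 1) x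

private lemma eb0_iter : ∀ (n x : ℕ), (eb 0)^[n] x = x + n := by
  intro n
  induction n with
  | zero => intro x; simp
  | succ n IH =>
    intro x
    rw [Function.iterate_succ_apply, IH]
    show x + 1 + n = x + (n + 1)
    omega

private lemma eb_ge : ∀ (b : ℕ), 1 ≤ b → ∀ x, 2 * x + 1 ≤ eb b x := by
  intro b
  induction b with
  | zero => intro hb; omega
  | succ b IH =>
    intro _ x
    show 2 * x + 1 ≤ (eb b)^[x + 1] x
    rcases Nat.eq_zero_or_pos b with hb0 | hb1
    · subst hb0
      rw [eb0_iter]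
      omega
    · rw [Function.iterate_succ_apply]
      calc 2 * x + 1 ≤ eb b x := IH hb1 x
        _ ≤ (eb b)^[x] (eb b x) := iter_le (eb_infl b) x (eb b x)

private lemma iter_bound (b : ℕ) (hb : 1 ≤ b) : ∀ (c x : ℕ), 2 ^ c * x ≤ (eb b)^[c] x := by
  intro c
  induction c with
  | zero => intro x; simp
  | succ c IH =>
    intro x
    rw [Function.iterate_succ_apply']
    calc 2 ^ (c + 1) * x = 2 * (2 ^ c * x) := by ring
      _ ≤ 2 * ((eb b)^[c] x) := by
          have := IH x; omega
      _ ≤ 2 * ((eb b)^[c] x) + 1 := Nat.le_succ _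
      _ ≤ eb b ((eb b)^[c] x) := eb_ge b hb _

/- ### Constructing derivations -/

private lemma hr_add_nat : ∀ (n : ℕ) (β : Ordinal) (x y : ℕ),
    HardyRel (fun n => n + 1) β (x + n) y →
    HardyRel (fun n => n + 1) (β + (n : Ordinal)) x y := by
  intro n
  induction n with
  | zero => intro β x y hrel; simpa using hrel
  | succ n IH =>
    intro β x y hrel
    have e : β + ((n + 1 : ℕ) : Ordinal) = (β + (n : Ordinal)) + 1 := by
      push_cast
      rw [add_assoc]
    rw [e]
    apply HardyRel.succ
    apply IH β (x + 1) y
    have : x + 1 + n = x + (n + 1) := by omega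
    rw [this]
    exact hrel

private lemma hr_main : ∀ (b : ℕ) (β : Ordinal) (m x y : ℕ),
    omega0 ^ (b + 1) ∣ β →
    HardyRel (fun n => n + 1) β ((eb b)^[m] x) y →
    HardyRel (fun n => n + 1) (β + omega0 ^ b * (m : Ordinal)) x y := by
  intro b
  induction b with
  | zero =>
    intro β m x y hdvd hrel
    rw [pow_zero, one_mul]
    exact hr_add_nat m β x y (by rwa [eb0_iter] at hrel)
  | succ b IH =>
    intro β m
    induction m with
    | zero =>
      intro x y hdvd hrel
      simpa using hrel
    | succ m IHm =>
      intro x y hdvd hrel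
      obtain ⟨δ, hδ⟩ := hdvd
      have hdvd2 : omega0 ^ (b + 1) ∣ β + omega0 ^ (b + 1) * (m : Ordinal) := by
        refine ⟨omega0 * δ + (m : Ordinal), ?_⟩
        rw [mul_add, hδ, ← mul_assoc, ← pow_succ]
      have e1 : β + omega0 ^ (b + 1) * ((m + 1 : ℕ) : Ordinal)
          = (β + omega0 ^ (b + 1) * (m : Ordinal)) + omega0 ^ (b + 1) := by
        push_cast
        rw [mul_add, mul_one, add_assoc]
      rw [e1]
      apply HardyRel.limit _ b x y hdvd2
      apply IH (β + omega0 ^ (b + 1) * (m : Ordinal)) (x + 1) x y hdvd2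
      show HardyRel _ _ ((eb b)^[x + 1] x) y
      have heb : (eb b)^[x + 1] x = eb (b + 1) x := rfl
      rw [heb]
      apply IHm (eb (b + 1) x) y ⟨δ, hδ⟩
      rwa [← Function.iterate_succ_apply]

private lemma hr_exists (b c x : ℕ) :
    HardyRel (fun n => n + 1) (omega0 ^ b * (c : Ordinal)) x ((eb b)^[c] x) := by
  have := hr_main b 0 c x ((eb b)^[c] x) (dvd_zero _) (HardyRel.zero _)
  simpa using this

/-- For `H(x) = x + 1` and all `b, c ≥ 1` and `x`, `H^(ω^b·c)(x) ≥ 2^c·x`. -/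
theorem stmt18 (h : ℕ → ℕ) (hmono : Monotone h) (hinfl : ∀ x, x ≤ h x)
    (b c : ℕ) (hb : 1 ≤ b) (hc : 1 ≤ c) :
    ∀ x y, HardyRel (fun n => n + 1) (omega0 ^ b * (c : Ordinal)) x y →
      2 ^ c * x ≤ y := by
  intro x y hrel
  have h1 := hr_exists b c x
  have h2 : (eb b)^[c] x = y := hardy_fun h1 hrel
  rw [← h2]
  exact iter_bound b hb c x
end

section
/- Let G = (Q, T) be a d-VASS in which some coordinate i ∈ [d] satisfies i ∉ supp(Cyc(G)) (every cycle of G has zero effect in coordinate i). Then for every run p(u) →* r(w) under ℕ^d-semantics, |w(i) − u(i)| ≤ |Q|·N, where N is the maximum absolute value of the i-th component of any transition effect. -/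
/-- A `d`-dimensional vector addition system with states: a finite set of
states (`Fin n`) and a finite set of transitions labelled by vectors in `ℤ^d`. -/
structure VASS (d : ℕ) where
  n : ℕ
  T : Finset (Fin n × (Fin d → ℤ) × Fin n)

namespace VASS

variable {d : ℕ}

abbrev Trans (G : VASS d) := Fin G.n × (Fin d → ℤ) × Fin G.n

/-- `IsPathFrom G p q π` : the word of transitions `π` is a path of `G`
from state `p` to state `q`. -/
def IsPathFrom (G : VASS d) : Fin G.n → Fin G.n → List G.Trans → Prop
  | p, q, [] => p = q
  | p, q, t :: rest => t ∈ G.T ∧ t.1 = p ∧ IsPathFrom G t.2.2 q rest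

/-- The effect of a path: the sum of the vectors on its transitions. -/
def effect {m : ℕ} (π : List (Fin m × (Fin d → ℤ) × Fin m)) : Fin d → ℤ :=
  (π.map fun t => t.2.1).sum

/-- The effect of a path, as a vector over `ℚ`. -/
def effectQ {m : ℕ} (π : List (Fin m × (Fin d → ℤ) × Fin m)) : Fin d → ℚ :=
  fun i => ((effect π i : ℤ) : ℚ)

/-- The cycle space `Cyc(G)`: the `ℚ`-span of the effects of all cycles. -/
def Cyc (G : VASS d) : Submodule ℚ (Fin d → ℚ) :=
  Submodule.span ℚ {v | ∃ (q : Fin G.n) (π : List G.Trans), IsPathFrom G q q π ∧ v = effectQ π}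

/-- `Cyc(G/t)`: the `ℚ`-span of the effects of all cycles containing `t`. -/
def CycThrough (G : VASS d) (t : G.Trans) : Submodule ℚ (Fin d → ℚ) :=
  Submodule.span ℚ
    {v | ∃ (q : Fin G.n) (π : List G.Trans), IsPathFrom G q q π ∧ t ∈ π ∧ v = effectQ π}

/-- `G` is strongly connected if every state reaches every other via a path. -/
def StronglyConnected (G : VASS d) : Prop :=
  ∀ p q : Fin G.n, ∃ π : List G.Trans, IsPathFrom G p q π

end VASS

open VASS

/-- Reachability between configurations under `ℕ^d`-semantics: each step adds
the effect of a transition and all intermediate vectors stay in `ℕ^d`. -/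
inductive Reaches {d : ℕ} (G : VASS d) :
    Fin G.n → (Fin d → ℕ) → Fin G.n → (Fin d → ℕ) → Prop
  | refl (p : Fin G.n) (u : Fin d → ℕ) : Reaches G p u p u
  | step (p : Fin G.n) (u : Fin d → ℕ) (a : Fin d → ℤ) (q : Fin G.n)
      (v : Fin d → ℕ) (r : Fin G.n) (w : Fin d → ℕ) :
      (p, a, q) ∈ G.T → (∀ x, (v x : ℤ) = (u x : ℤ) + a x) →
      Reaches G q v r w → Reaches G p u r w

section Aux

variable {d : ℕ} {G : VASS d}

lemma effect_cons (t : G.Trans) (π : List G.Trans) :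
    effect (t :: π) = t.2.1 + effect π := by
  simp [effect]

lemma isPathFrom_append {p q r : Fin G.n} {α β : List G.Trans}
    (h1 : IsPathFrom G p q α) (h2 : IsPathFrom G q r β) :
    IsPathFrom G p r (α ++ β) := by
  induction α generalizing p with
  | nil => cases h1; simpa using h2
  | cons t rest ih =>
    obtain ⟨ht, hp, hrest⟩ := h1
    exact ⟨ht, hp, ih hrest⟩

lemma isPathFrom_split {p r : Fin G.n} (α : List G.Trans) {β : List G.Trans}
    (h : IsPathFrom G p r (α ++ β)) :
    ∃ q, IsPathFrom G p q α ∧ IsPathFrom G q r β := by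
  induction α generalizing p with
  | nil => exact ⟨p, rfl, h⟩
  | cons t rest ih =>
    obtain ⟨ht, hp, h'⟩ := h
    obtain ⟨q, h1, h2⟩ := ih h'
    exact ⟨q, ⟨ht, hp, h1⟩, h2⟩

lemma mem_T_of_isPathFrom : ∀ {π : List G.Trans} {p r : Fin G.n},
    IsPathFrom G p r π → ∀ t ∈ π, t ∈ G.T := by
  intro π
  induction π with
  | nil => intro p r h t ht; simp at ht
  | cons s rest ih =>
    intro p r h t ht
    obtain ⟨hs, _, h'⟩ := h
    rcases List.mem_cons.mp ht with h1 | h1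
    · exact h1 ▸ hs
    · exact ih h' t h1

lemma cycle_effect_zero {i : Fin d} (hcyc : ∀ v ∈ G.Cyc, v i = 0)
    {q : Fin G.n} {π : List G.Trans} (h : IsPathFrom G q q π) :
    effect π i = 0 := by
  have hmem : effectQ π ∈ G.Cyc := Submodule.subset_span ⟨q, π, h, rfl⟩
  have h0 : ((effect π i : ℤ) : ℚ) = 0 := hcyc _ hmem
  exact_mod_cast h0

/-- If the state sequence of a path has a repeated state, the path can be
shortened without changing the `i`-th coordinate of its effect. -/
lemma cut {i : Fin d} (hcyc : ∀ v ∈ G.Cyc, v i = 0) :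
    ∀ (π : List G.Trans) (p r : Fin G.n), IsPathFrom G p r π →
      ¬ (p :: π.map (fun t => t.2.2)).Nodup →
      ∃ π', IsPathFrom G p r π' ∧ π'.length < π.length ∧
        effect π' i = effect π i := by
  intro π
  induction π with
  | nil =>
    intro p r h hn
    exact absurd (List.nodup_singleton p) (by simpa using hn)
  | cons t ρ ih =>
    intro p r h hn
    obtain ⟨ht, hp, hρ⟩ := h
    by_cases hmem : p ∈ (t :: ρ).map (fun t => t.2.2)
    · obtain ⟨s, hs, hfs⟩ := List.mem_map.mp hmem
      obtain ⟨σ, τ, hsplit⟩ := List.append_of_mem hs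
      have h2 : IsPathFrom G p r (σ ++ s :: τ) := hsplit ▸ ⟨ht, hp, hρ⟩
      obtain ⟨q, hσ, hsτ⟩ := isPathFrom_split σ h2
      obtain ⟨hsT, hq, hτ⟩ := hsτ
      have hτp : IsPathFrom G p r τ := hfs ▸ hτ
      have hcycpath : IsPathFrom G p p (σ ++ [s]) :=
        isPathFrom_append hσ ⟨hsT, hq, hfs⟩
      have hzero : effect (σ ++ [s]) i = 0 := cycle_effect_zero hcyc hcycpath
      have heq : effect (t :: ρ) i = effect (σ ++ [s]) i + effect τ i := by
        have : (t :: ρ) = (σ ++ [s]) ++ τ := by simp [hsplit]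
        rw [this]
        simp [effect]
        ring
      refine ⟨τ, hτp, ?_, by rw [heq, hzero, zero_add]⟩
      have : (t :: ρ).length = σ.length + 1 + τ.length := by
        rw [hsplit]; simp; omega
      omega
    · have hn' : ¬ (t.2.2 :: ρ.map (fun t => t.2.2)).Nodup := by
        intro hnd
        apply hn
        rw [List.map_cons]
        exact List.nodup_cons.mpr ⟨by rw [List.map_cons] at hmem; exact hmem, hnd⟩
      obtain ⟨ρ', hρ', hlt, heff⟩ := ih t.2.2 r hρ hn'
      refine ⟨t :: ρ', ⟨ht, hp, hρ'⟩, by simp only [List.length_cons]; omega, ?_⟩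
      rw [effect_cons, effect_cons, Pi.add_apply, Pi.add_apply, heff]

lemma effect_abs_le {i : Fin d} {N : ℕ} (hN : ∀ t ∈ G.T, (t.2.1 i).natAbs ≤ N) :
    ∀ π : List G.Trans, (∀ t ∈ π, t ∈ G.T) →
      |effect π i| ≤ (π.length : ℤ) * N := by
  intro π
  induction π with
  | nil => intro _; simp [effect]
  | cons t ρ ih =>
    intro hmem
    have h1 : |t.2.1 i| ≤ (N : ℤ) := by
      have := hN t (hmem t List.mem_cons_self)
      rw [Int.abs_eq_natAbs]
      exact_mod_cast this
    have h2 := ih (fun s hs => hmem s (List.mem_cons_of_mem t hs))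
    have h3 : effect (t :: ρ) i = t.2.1 i + effect ρ i := by
      rw [effect_cons, Pi.add_apply]
    rw [h3]
    calc |t.2.1 i + effect ρ i| ≤ |t.2.1 i| + |effect ρ i| := abs_add_le _ _
      _ ≤ (N : ℤ) + (ρ.length : ℤ) * N := add_le_add h1 h2
      _ = ((t :: ρ).length : ℤ) * N := by simp; push_cast; ring

lemma main_bound {i : Fin d} (hcyc : ∀ v ∈ G.Cyc, v i = 0)
    {N : ℕ} (hN : ∀ t ∈ G.T, (t.2.1 i).natAbs ≤ N) :
    ∀ (k : ℕ) (π : List G.Trans) (p r : Fin G.n), π.length ≤ k →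
      IsPathFrom G p r π → |effect π i| ≤ (G.n : ℤ) * N := by
  intro k
  induction k with
  | zero =>
    intro π p r hl h
    have : π = [] := List.length_eq_zero_iff.mp (Nat.le_zero.mp hl)
    subst this
    simp [effect]
    positivity
  | succ k ih =>
    intro π p r hl h
    by_cases hnd : (p :: π.map (fun t => t.2.2)).Nodup
    · have hlen := hnd.length_le_card
      simp [Fintype.card_fin] at hlen
      have hb := effect_abs_le hN π (mem_T_of_isPathFrom h)
      calc |effect π i| ≤ (π.length : ℤ) * N := hb
        _ ≤ (G.n : ℤ) * N := by
          have hle : (π.length : ℤ) ≤ (G.n : ℤ) := by exact_mod_cast Nat.le_of_lt_succ (Nat.lt_succ_of_le (by omega))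
          exact mul_le_mul_of_nonneg_right hle (by positivity)
    · obtain ⟨π', h', hlt, heff⟩ := cut hcyc π p r h hnd
      rw [← heff]
      exact ih π' p r (by omega) h'

lemma reaches_path {p r : Fin G.n} {u w : Fin d → ℕ} (h : Reaches G p u r w) :
    ∃ π, IsPathFrom G p r π ∧ ∀ x, (w x : ℤ) = (u x : ℤ) + effect π x := by
  induction h with
  | refl p u => exact ⟨[], rfl, by simp [effect]⟩
  | step p u a q v r w ht hv _ ih =>
    obtain ⟨π, hπ, he⟩ := ih
    refine ⟨(p, a, q) :: π, ⟨ht, rfl, hπ⟩, fun x => ?_⟩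
    have h1 := he x
    have h2 := hv x
    rw [effect_cons, Pi.add_apply]
    have h3 : ((p, a, q) : G.Trans).2.1 x = a x := rfl
    rw [h3]
    omega

end Aux

/-- If coordinate `i` is outside the support of `Cyc(G)`, then along any run of
`G` the `i`-th coordinate changes by at most `|Q|·N`, where `N` bounds the
absolute value of the `i`-th component of every transition effect. -/


theorem stmt19 {d : ℕ} (G : VASS d) (i : Fin d)
    (hcyc : ∀ v ∈ G.Cyc, v i = 0)
    (N : ℕ) (hN : ∀ t ∈ G.T, (t.2.1 i).natAbs ≤ N)
    (p r : Fin G.n) (u w : Fin d → ℕ) (h : Reaches G p u r w) :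
    |(w i : ℤ) - (u i : ℤ)| ≤ (G.n : ℤ) * N := by
  obtain ⟨π, hπ, he⟩ := reaches_path h
  have : (w i : ℤ) - (u i : ℤ) = effect π i := by have := he i; omega
  rw [this]
  exact main_bound hcyc hN π.length π p r le_rfl hπ
end
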